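/- arXiv:1911.04857 — 2 statements merged into one kernel-verified Lean document; each statement's English description precedes it below -/
import Mathlib

section
/- For every non-empty bounded set F in R^n and every theta in (0,1), the upper Assouad spectrum of F at theta is at most (upper box dimension of F)/(1 - theta). -/
open Filter MeasureTheory Metric Set

noncomputable section
open scoped Classical

variable {E : Type*}

/-- Minimal number of sets of diameter at most `r` needed to cover `F`. -/
def coverNum [PseudoMetricSpace E] (r : ℝ) (F : Set E) : ℕ :=
  sInf {k : ℕ | ∃ I : Finset (Set E), I.card = k ∧ (∀ U ∈ I, Metric.diam U ≤ r) ∧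
    F ⊆ ⋃ U ∈ I, U}

/-- Maximal cardinality of an `r`-separated subset of `F`. -/
def sepNum [PseudoMetricSpace E] (r : ℝ) (F : Set E) : ℕ :=
  sSup {k : ℕ | ∃ T : Finset E, T.card = k ∧ ↑T ⊆ F ∧
    ∀ x ∈ T, ∀ y ∈ T, x ≠ y → r ≤ dist x y}

/-- Upper box-counting dimension. -/
def ubDim [PseudoMetricSpace E] (F : Set E) : ℝ :=
  limsup (fun r : ℝ => Real.log (coverNum r F) / -Real.log r) (nhdsWithin 0 (Set.Ioi 0))

/-- Lower box-counting dimension. -/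
def lbDim [PseudoMetricSpace E] (F : Set E) : ℝ :=
  liminf (fun r : ℝ => Real.log (coverNum r F) / -Real.log r) (nhdsWithin 0 (Set.Ioi 0))

/-- Packing dimension, via countable covers by compact sets. -/
def packDim [PseudoMetricSpace E] (F : Set E) : ℝ :=
  sInf {d : ℝ | ∃ K : ℕ → Set E, (∀ j, IsCompact (K j)) ∧ F ⊆ ⋃ j, K j ∧
    ∀ j, ubDim (K j) ≤ d}

/-- Assouad dimension. -/
def assouadDim [PseudoMetricSpace E] (F : Set E) : ℝ :=
  sInf {α : ℝ | ∃ C : ℝ, 0 < C ∧ ∀ x ∈ F, ∀ r R : ℝ, 0 < r → r < R →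
    (coverNum r (Metric.ball x R ∩ F) : ℝ) ≤ C * (R / r) ^ α}

/-- Upper Assouad spectrum at `θ`. -/
def upperAssouadSpectrum [PseudoMetricSpace E] (θ : ℝ) (F : Set E) : ℝ :=
  sInf {α : ℝ | ∃ C : ℝ, 0 < C ∧ ∀ x ∈ F, ∀ r R : ℝ, 0 < r → 0 < R →
    r ≤ R ^ (1/θ) → R ^ (1/θ) < R → R < 1 →
    (coverNum r (Metric.ball x R ∩ F) : ℝ) ≤ C * (R / r) ^ α}

/-- Assouad spectrum at `θ` (with `r = R^{1/θ}`). -/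
def assouadSpectrum [PseudoMetricSpace E] (θ : ℝ) (F : Set E) : ℝ :=
  sInf {α : ℝ | ∃ C : ℝ, 0 < C ∧ ∀ x ∈ F, ∀ R : ℝ, 0 < R → R ^ (1/θ) < R → R < 1 →
    (coverNum (R ^ (1/θ)) (Metric.ball x R ∩ F) : ℝ) ≤ C * (R / R ^ (1/θ)) ^ α}

/-- Quasi-Assouad dimension: limit of the upper Assouad spectrum as `θ ↗ 1`. -/
def qaDim [PseudoMetricSpace E] (F : Set E) : ℝ :=
  limsup (fun θ : ℝ => upperAssouadSpectrum θ F) (nhdsWithin 1 (Set.Iio 1))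

/-- The kernel `φ_r^s(x) = min{1, (r/|x|)^s}` (equal to `1` at `x = 0`). -/
def riesz [NormedAddCommGroup E] (s r : ℝ) (x : E) : ℝ :=
  if x = 0 then 1 else min 1 ((r / ‖x‖) ^ s)

/-- The energy of a measure with respect to the kernel `φ_r^s`. -/
def energy [NormedAddCommGroup E] [MeasurableSpace E] (s r : ℝ) (μ : Measure E) : ℝ :=
  ∫ x, ∫ y, riesz s r (x - y) ∂μ ∂μ

/-- The capacity `C_r^s(F)`: reciprocal of the infimal energy over Borel probability
measures supported on the closure of `F`. -/
def capacity [NormedAddCommGroup E] [MeasurableSpace E] (s r : ℝ) (F : Set E) : ℝ :=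
  (sInf {e : ℝ | ∃ μ : Measure E, IsProbabilityMeasure μ ∧ μ (closure F) = 1 ∧
    e = energy s r μ})⁻¹

/-- Upper box dimension profile at exponent `s`. -/
def ubDimProfile [NormedAddCommGroup E] [MeasurableSpace E] (s : ℝ) (F : Set E) : ℝ :=
  limsup (fun r : ℝ => Real.log (capacity s r F) / -Real.log r) (nhdsWithin 0 (Set.Ioi 0))

/-- Lower box dimension profile at exponent `s`. -/
def lbDimProfile [NormedAddCommGroup E] [MeasurableSpace E] (s : ℝ) (F : Set E) : ℝ :=
  liminf (fun r : ℝ => Real.log (capacity s r F) / -Real.log r) (nhdsWithin 0 (Set.Ioi 0))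

/-- Packing dimension profile at exponent `s`. -/
def packDimProfile [NormedAddCommGroup E] [MeasurableSpace E] (s : ℝ) (F : Set E) : ℝ :=
  sInf {d : ℝ | ∃ K : ℕ → Set E, (∀ j, IsCompact (K j)) ∧ F ⊆ ⋃ j, K j ∧
    ∀ j, ubDimProfile s (K j) ≤ d}

/-- The Grassmannian of `m`-dimensional subspaces of `ℝⁿ`. -/
def Grass (n m : ℕ) : Type :=
  {V : Submodule ℝ (EuclideanSpace ℝ (Fin n)) // Module.finrank ℝ V = m}

instance (n m : ℕ) : MeasurableSpace (Grass n m) := ⊤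

/-- Action of the orthogonal group on the Grassmannian. -/
def grassAction {n m : ℕ}
    (g : EuclideanSpace ℝ (Fin n) ≃ₗᵢ[ℝ] EuclideanSpace ℝ (Fin n)) (V : Grass n m) :
    Grass n m :=
  ⟨(V.1).map (g.toLinearEquiv : EuclideanSpace ℝ (Fin n) →ₗ[ℝ] EuclideanSpace ℝ (Fin n)),
    by rw [LinearEquiv.finrank_map_eq]; exact V.2⟩

/-- Image of `F` under orthogonal projection onto the subspace `V`. -/
def projImg {n : ℕ} (V : Submodule ℝ (EuclideanSpace ℝ (Fin n)))
    (F : Set (EuclideanSpace ℝ (Fin n))) : Set (EuclideanSpace ℝ (Fin n)) :=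
  (fun x => (V.orthogonalProjectionOnto x : EuclideanSpace ℝ (Fin n))) '' F

/-- The set of reals `∑_{k≥1} a_k 2^{-k}` with binary digits `a_k ∈ {0,1}` vanishing
outside `S`. -/
def XS (S : Set ℕ) : Set ℝ :=
  {x | ∃ a : ℕ → ℝ, (∀ k, a k = 0 ∨ a k = 1) ∧ (∀ k, k ∉ S → a k = 0) ∧
    x = ∑' k : ℕ, a (k + 1) * (2 : ℝ) ^ (-(k + 1 : ℤ))}

/-- The `n`-fold product `X_S^n ⊆ [0,1]^n`. -/
def XSn (n : ℕ) (S : Set ℕ) : Set (EuclideanSpace ℝ (Fin n)) :=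
  {x | ∀ i, x i ∈ XS S}

/-- Upper density of a set of naturals. -/
def upperDensity (S : Set ℕ) : ℝ :=
  limsup (fun k : ℕ => ((S ∩ Set.Icc 1 k).ncard : ℝ) / k) atTop

/-- Upper Banach density of a set of naturals. -/
def upperBanachDensity (S : Set ℕ) : ℝ :=
  limsup (fun k : ℕ => ⨆ l : ℕ, ((S ∩ Set.Ico l (l + k)).ncard : ℝ) / k) atTop

/-- `F` can be covered by at most `N` axis-parallel cubes of side `δ`. -/
def CoveredByCubes {n : ℕ} (F : Set (EuclideanSpace ℝ (Fin n))) (N δ : ℝ) : Prop :=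
  ∃ I : Finset (EuclideanSpace ℝ (Fin n)), (I.card : ℝ) ≤ N ∧
    F ⊆ ⋃ c ∈ I, {x | ∀ i, x i ∈ Set.Icc (c i) (c i + δ)}

end

section Stmt1Helpers
open Filter Metric Set
open scoped Classical

lemma exists_grid {n : ℕ} {M s r : ℝ} (hM : 0 ≤ M) (hs : 0 < s) (hsr : s ≤ r)
    {F : Set (EuclideanSpace ℝ (Fin n))} (hF : F ⊆ Metric.closedBall 0 M) :
    ∃ I : Finset (Set (EuclideanSpace ℝ (Fin n))),
      I.card ≤ (⌊2 * M * (n + 1) / s⌋₊ + 1) ^ n ∧ (∀ U ∈ I, Metric.diam U ≤ r) ∧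
      F ⊆ ⋃ U ∈ I, U := by
  set δ : ℝ := s / (n + 1) with hδdef
  have hn1 : (0:ℝ) < (n:ℝ) + 1 := by positivity
  have hδ : 0 < δ := div_pos hs hn1
  set K : ℕ := ⌊2 * M * (n + 1) / s⌋₊ + 1 with hK
  set grid1 : Finset ℝ := (Finset.range K).image (fun j : ℕ => -M + (j:ℝ) * δ) with hg1
  set centers : Finset (Fin n → ℝ) := Fintype.piFinset (fun _ => grid1) with hc
  set cube : (Fin n → ℝ) → Set (EuclideanSpace ℝ (Fin n)) :=
    fun c => {x : EuclideanSpace ℝ (Fin n) | ∀ i, x i ∈ Set.Icc (c i) (c i + δ)} with hcube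
  refine ⟨centers.image cube, ?_, ?_, ?_⟩
  · calc (centers.image cube).card ≤ centers.card := Finset.card_image_le
      _ = ∏ _i : Fin n, grid1.card := by simp [hc]
      _ ≤ ∏ _i : Fin n, K := by
          refine Finset.prod_le_prod (by intros; positivity) ?_
          intros
          exact (Finset.card_image_le).trans (by simp [hK])
      _ = K ^ n := by simp
  · intro U hU
    obtain ⟨c, -, rfl⟩ := Finset.mem_image.mp hU
    refine Metric.diam_le_of_forall_dist_le (hs.le.trans hsr) ?_
    intro x hx y hy
    have hd : dist x y ≤ Real.sqrt (n * δ ^ 2) := by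
      rw [EuclideanSpace.dist_eq]
      apply Real.sqrt_le_sqrt
      calc ∑ i, dist (x i) (y i) ^ 2 ≤ ∑ _i : Fin n, δ ^ 2 := by
            refine Finset.sum_le_sum fun i _ => ?_
            have h1 := hx i; have h2 := hy i
            have habs : |x i - y i| ≤ δ := abs_le.mpr ⟨by linarith [h1.1, h1.2, h2.1, h2.2], by linarith [h1.1, h1.2, h2.1, h2.2]⟩
            rw [Real.dist_eq]
            exact pow_le_pow_left₀ (abs_nonneg _) habs 2
        _ = n * δ ^ 2 := by simp [mul_comm]
    refine hd.trans ?_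
    rw [Real.sqrt_mul (by positivity), Real.sqrt_sq hδ.le]
    have hsq : Real.sqrt n ≤ (n:ℝ) + 1 := by
      rw [show ((n:ℝ)+1) = Real.sqrt (((n:ℝ)+1)^2) by rw [Real.sqrt_sq (by positivity)]]
      apply Real.sqrt_le_sqrt; nlinarith
    calc Real.sqrt n * δ ≤ ((n:ℝ)+1) * δ := by nlinarith
      _ = s := by rw [hδdef]; field_simp
      _ ≤ r := hsr
  · intro x hx
    have hxM : ∀ i, |x i| ≤ M := by
      intro i
      have hn : ‖x‖ ≤ M := by simpa [Metric.mem_closedBall, dist_zero_right] using hF hx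
      refine le_trans ?_ hn
      rw [EuclideanSpace.norm_eq]
      rw [show |x i| = Real.sqrt (‖x i‖^2) by rw [Real.sqrt_sq_eq_abs, Real.norm_eq_abs, abs_abs]]
      apply Real.sqrt_le_sqrt
      exact Finset.single_le_sum (f := fun j => ‖x j‖^2) (fun j _ => by positivity) (Finset.mem_univ i)
    set c : Fin n → ℝ := fun i => -M + (⌊(x i + M) / δ⌋₊ : ℝ) * δ with hcdef
    have hmem : c ∈ centers := by
      rw [hc, Fintype.mem_piFinset]
      intro i
      refine Finset.mem_image.mpr ⟨⌊(x i + M) / δ⌋₊, ?_, rfl⟩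
      rw [Finset.mem_range, hK]
      have h1 : (x i + M) / δ ≤ 2 * M * (n + 1) / s := by
        rw [hδdef, div_div_eq_mul_div, div_le_div_iff₀ hs (by positivity)]
        have := (abs_le.mp (hxM i)).2
        nlinarith [mul_nonneg (mul_nonneg (sub_nonneg.mpr this) hn1.le) hs.le]
      exact Nat.lt_succ_of_le (Nat.floor_le_floor h1)
    refine Set.mem_iUnion₂.mpr ⟨cube c, Finset.mem_image.mpr ⟨c, hmem, rfl⟩, ?_⟩
    intro i
    have hnn : 0 ≤ (x i + M) / δ := by
      have := (abs_le.mp (hxM i)).1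
      exact div_nonneg (by linarith) hδ.le
    constructor
    · have := Nat.floor_le hnn
      have h2 : (⌊(x i + M) / δ⌋₊ : ℝ) * δ ≤ x i + M := by
        rw [← le_div_iff₀ hδ]; exact this
      simp only [hcdef]; linarith
    · have := Nat.lt_floor_add_one ((x i + M) / δ)
      have h2 : x i + M ≤ ((⌊(x i + M) / δ⌋₊ : ℝ) + 1) * δ := by
        rw [← div_le_iff₀ hδ]; exact this.le
      simp only [hcdef]; linarith

lemma coverNum_le_pow {n : ℕ} {M s r : ℝ} (hM : 0 ≤ M) (hs : 0 < s) (hsr : s ≤ r)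
    {F : Set (EuclideanSpace ℝ (Fin n))} (hF : F ⊆ Metric.closedBall 0 M) :
    coverNum r F ≤ (⌊2 * M * (n + 1) / s⌋₊ + 1) ^ n := by
  obtain ⟨I, hcard, hdiam, hcov⟩ := exists_grid hM hs hsr hF
  exact le_trans (Nat.sInf_le ⟨I, rfl, hdiam, hcov⟩) hcard

lemma coverSet_nonempty {n : ℕ} {M r : ℝ} (hM : 0 ≤ M) (hr : 0 < r)
    {F : Set (EuclideanSpace ℝ (Fin n))} (hF : F ⊆ Metric.closedBall 0 M) :
    {k : ℕ | ∃ I : Finset (Set (EuclideanSpace ℝ (Fin n))), I.card = k ∧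
      (∀ U ∈ I, Metric.diam U ≤ r) ∧ F ⊆ ⋃ U ∈ I, U}.Nonempty := by
  obtain ⟨I, -, hdiam, hcov⟩ := exists_grid hM hr le_rfl hF
  exact ⟨I.card, I, rfl, hdiam, hcov⟩

lemma one_le_coverNum {n : ℕ} {M r : ℝ} (hM : 0 ≤ M) (hr : 0 < r)
    {F : Set (EuclideanSpace ℝ (Fin n))} (hF : F ⊆ Metric.closedBall 0 M)
    (hne : F.Nonempty) : 1 ≤ coverNum r F := by
  rw [Nat.one_le_iff_ne_zero]
  intro h0
  have hmem := Nat.sInf_mem (coverSet_nonempty hM hr hF)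
  rw [show sInf _ = coverNum r F from rfl, h0] at hmem
  obtain ⟨I, hcard, -, hcov⟩ := hmem
  obtain ⟨x, hx⟩ := hne
  rw [Finset.card_eq_zero] at hcard
  subst hcard
  simpa using hcov hx

lemma coverNum_mono {n : ℕ} {M r : ℝ} (hM : 0 ≤ M) (hr : 0 < r)
    {F G : Set (EuclideanSpace ℝ (Fin n))} (hGF : G ⊆ F)
    (hF : F ⊆ Metric.closedBall 0 M) : coverNum r G ≤ coverNum r F := by
  obtain ⟨I, hcard, hdiam, hcov⟩ := Nat.sInf_mem (coverSet_nonempty hM hr hF)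
  exact Nat.sInf_le ⟨I, hcard, hdiam, hGF.trans hcov⟩

end Stmt1Helpers

/-- the upper Assouad spectrum is at most `ubDim F / (1-θ)`. -/
theorem stmt_1 {n : ℕ} (F : Set (EuclideanSpace ℝ (Fin n))) (hne : F.Nonempty)
    (hb : Bornology.IsBounded F) (θ : ℝ) (hθ : θ ∈ Set.Ioo (0:ℝ) 1) :
    upperAssouadSpectrum θ F ≤ ubDim F / (1 - θ) := by
  obtain ⟨θpos, θlt⟩ := hθ
  have hθ1 : (0:ℝ) < 1 - θ := by linarith
  obtain ⟨M₀, hM₀⟩ := hb.subset_closedBall (0 : EuclideanSpace ℝ (Fin n))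
  set M : ℝ := max M₀ 0 with hMdef
  have hM : 0 ≤ M := le_max_right _ _
  have hFM : F ⊆ Metric.closedBall 0 M :=
    hM₀.trans (Metric.closedBall_subset_closedBall (le_max_left _ _))
  set l := nhdsWithin (0:ℝ) (Set.Ioi 0) with hl
  set f : ℝ → ℝ := fun r => Real.log (coverNum r F) / -Real.log r with hf
  set D : ℝ := ubDim F with hD
  have hDdef : D = limsup f l := rfl
  have hN1 : ∀ r : ℝ, 0 < r → 1 ≤ coverNum r F := fun r hr => one_le_coverNum hM hr hFM hne
  have hN1' : ∀ r : ℝ, 0 < r → (1:ℝ) ≤ (coverNum r F : ℝ) := by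
    intro r hr; exact_mod_cast hN1 r hr
  set A : ℝ := 2 * M * (n + 1) + 1 with hAdef
  have hA1 : 1 ≤ A := le_add_of_nonneg_left (by positivity)
  have hNpoly : ∀ r : ℝ, 0 < r → r ≤ 1 → (coverNum r F : ℝ) ≤ (A / r) ^ n := by
    intro r hr hr1
    have h1 := coverNum_le_pow hM hr le_rfl hFM
    have hfl : (⌊2 * M * ((n:ℝ) + 1) / r⌋₊ : ℝ) ≤ 2 * M * ((n:ℝ) + 1) / r :=
      Nat.floor_le (by positivity)
    have hinv : 1 ≤ 1 / r := one_le_one_div hr hr1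
    have hAr : A / r = 2 * M * ((n:ℝ) + 1) / r + 1 / r := by rw [hAdef, add_div]
    have h2 : ((⌊2 * M * ((n:ℝ) + 1) / r⌋₊ : ℝ) + 1) ≤ A / r := by
      rw [hAr]; linarith
    calc (coverNum r F : ℝ) ≤ ((⌊2 * M * ((n:ℝ) + 1) / r⌋₊ + 1 : ℕ) : ℝ) ^ n := by
          exact_mod_cast h1
      _ ≤ (A / r) ^ n := by
          push_cast
          exact pow_le_pow_left₀ (by positivity) h2 n
  -- boundedness of f near 0
  have hBex : ∃ B : ℝ, ∀ r ∈ Set.Ioc (0:ℝ) (1/2), f r ≤ B := by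
    refine ⟨n * max (Real.log A) 0 / Real.log 2 + n, ?_⟩
    rintro r ⟨hr, hr2⟩
    have hr1 : r ≤ 1 := by linarith
    have ht0 : 0 < -Real.log r := by
      rw [neg_pos]; exact Real.log_neg hr (by linarith)
    have ht2 : Real.log 2 ≤ -Real.log r := by
      rw [← Real.log_inv]
      refine Real.log_le_log two_pos ?_
      have h2r := one_div_le_one_div_of_le hr hr2
      rw [one_div] at h2r
      norm_num at h2r
      exact h2r
    have hlogN : Real.log (coverNum r F) ≤ n * Real.log A + n * (-Real.log r) := by
      calc Real.log (coverNum r F) ≤ Real.log ((A/r)^n) :=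
            Real.log_le_log (by linarith [hN1' r hr]) (hNpoly r hr hr1)
        _ = n * Real.log (A/r) := by rw [Real.log_pow]
        _ = n * (Real.log A - Real.log r) := by rw [Real.log_div (by positivity) hr.ne']
        _ = n * Real.log A + n * (-Real.log r) := by ring
    have h3 : f r ≤ (n * Real.log A + n * (-Real.log r)) / (-Real.log r) :=
      (div_le_div_iff_of_pos_right ht0).mpr hlogN
    have h5 : ((n:ℝ) * Real.log A + n * (-Real.log r)) / (-Real.log r)
        = (n:ℝ) * Real.log A / (-Real.log r) + n := by
      rw [add_div]
      congr 1
      rw [mul_div_assoc, div_self ht0.ne', mul_one]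
    refine h3.trans ?_
    rw [h5]
    have h4 : (n:ℝ) * Real.log A / (-Real.log r) ≤ n * max (Real.log A) 0 / Real.log 2 := by
      rcases le_or_gt (Real.log A) 0 with h | h
      · have h5 : (n:ℝ) * Real.log A ≤ 0 := mul_nonpos_of_nonneg_of_nonpos (by positivity) h
        calc (n:ℝ) * Real.log A / (-Real.log r) ≤ 0 :=
              div_nonpos_iff.mpr (Or.inr ⟨h5, ht0.le⟩)
          _ ≤ _ := by positivity
      · exact div_le_div₀ (by positivity)
          (mul_le_mul_of_nonneg_left (le_max_left _ _) (by positivity))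
          (Real.log_pos one_lt_two) ht2
    linarith [h4]
  obtain ⟨B, hB⟩ := hBex
  have hIoo : Set.Ioo (0:ℝ) (1/2) ∈ l := Ioo_mem_nhdsGT_of_mem ⟨le_refl 0, by norm_num⟩
  have hevB : ∀ᶠ r in l, f r ≤ B := by
    filter_upwards [hIoo] with r hr
    exact hB r ⟨hr.1, hr.2.le⟩
  have hbd : IsBoundedUnder (· ≤ ·) l f := ⟨B, eventually_map.mpr hevB⟩
  have hD0 : 0 ≤ D := by
    rw [hDdef]
    refine le_limsup_of_frequently_le ?_ hbd
    refine Filter.Eventually.frequently ?_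
    filter_upwards [hIoo] with r hr
    refine div_nonneg (Real.log_nonneg (hN1' r hr.1)) ?_
    rw [neg_nonneg]
    exact Real.log_nonpos hr.1.le (by linarith [hr.2])
  -- the key covering claim
  have hclaim : ∀ ε : ℝ, 0 < ε → ∃ C : ℝ, 1 ≤ C ∧ ∀ r : ℝ, 0 < r → r < 1 →
      ∀ G : Set (EuclideanSpace ℝ (Fin n)), G ⊆ F →
      (coverNum r G : ℝ) ≤ C * r ^ (-(D + ε)) := by
    intro ε hε
    have hev : ∀ᶠ r in l, f r < D + ε := by
      refine eventually_lt_of_limsup_lt ?_ hbd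
      rw [← hDdef]; linarith
    obtain ⟨u, hu, hsub⟩ := mem_nhdsGT_iff_exists_Ioc_subset.mp hev
    set r₀ : ℝ := min u (1/2) with hr₀def
    have hr₀ : 0 < r₀ := lt_min hu (by norm_num)
    set N₁ : ℕ := (⌊2 * M * (n + 1) / r₀⌋₊ + 1) ^ n with hN₁
    refine ⟨(N₁ : ℝ) + 1, le_add_of_nonneg_left (Nat.cast_nonneg _), ?_⟩
    intro r hr hr1 G hGF
    have hmono : (coverNum r G : ℝ) ≤ (coverNum r F : ℝ) := by
      exact_mod_cast coverNum_mono hM hr hGF hFM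
    have hrpow : 0 ≤ r ^ (-(D + ε)) := Real.rpow_nonneg hr.le _
    rcases le_or_gt r r₀ with hcase | hcase
    · -- small r : use the dimension bound
      have hfr : f r < D + ε := hsub ⟨hr, hcase.trans (min_le_left _ _)⟩
      have ht0 : 0 < -Real.log r := by
        rw [neg_pos]; exact Real.log_neg hr hr1
      have hlt : Real.log (coverNum r F) < (D + ε) * (-Real.log r) := by
        have := (div_lt_iff₀ ht0).mp hfr
        linarith
      have hexp : (coverNum r F : ℝ) ≤ r ^ (-(D + ε)) := by
        rw [Real.rpow_def_of_pos hr]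
        rw [← Real.exp_log (show (0:ℝ) < (coverNum r F : ℝ) by linarith [hN1' r hr])]
        apply Real.exp_le_exp.mpr
        nlinarith [hlt]
      calc (coverNum r G : ℝ) ≤ r ^ (-(D + ε)) := hmono.trans hexp
        _ ≤ ((N₁:ℝ) + 1) * r ^ (-(D + ε)) := by nlinarith [hrpow]
    · -- large r : uniform bound
      have h1 : coverNum r F ≤ N₁ := coverNum_le_pow hM hr₀ hcase.le hFM
      have h2 : (1:ℝ) ≤ r ^ (-(D + ε)) :=
        Real.one_le_rpow_of_pos_of_le_one_of_nonpos hr hr1.le (by linarith)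
      have h3 : (coverNum r G : ℝ) ≤ (N₁ : ℝ) := hmono.trans (by exact_mod_cast h1)
      nlinarith [h3, h2, hrpow]
  -- conclusion
  rw [upperAssouadSpectrum]
  set S := {α : ℝ | ∃ C : ℝ, 0 < C ∧ ∀ x ∈ F, ∀ r R : ℝ, 0 < r → 0 < R →
    r ≤ R ^ (1/θ) → R ^ (1/θ) < R → R < 1 →
    (coverNum r (Metric.ball x R ∩ F) : ℝ) ≤ C * (R / r) ^ α} with hS
  by_cases hbdd : BddBelow S
  · refine le_of_forall_pos_le_add ?_
    intro ε hε
    set ε' : ℝ := ε * (1 - θ) with hε'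
    have hε'0 : 0 < ε' := by positivity
    obtain ⟨C, hC1, hC⟩ := hclaim ε' hε'0
    set α : ℝ := (D + ε') / (1 - θ) with hα
    have hα0 : 0 ≤ α := div_nonneg (by linarith) hθ1.le
    have hmem : α ∈ S := by
      refine ⟨C, by linarith, ?_⟩
      intro x hx r R hr hR hrR hRR hR1
      have hr1 : r < 1 := lt_of_le_of_lt hrR (hRR.trans hR1)
      have hNb := hC r hr hr1 (Metric.ball x R ∩ F) Set.inter_subset_right
      refine hNb.trans ?_
      have hrθR : r ^ θ ≤ R := by
        have h1 : r ^ θ ≤ (R ^ (1/θ)) ^ θ := Real.rpow_le_rpow hr.le hrR θpos.le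
        rwa [← Real.rpow_mul hR.le, one_div, inv_mul_cancel₀ θpos.ne', Real.rpow_one] at h1
      have hbase : r ^ (-(1 - θ)) ≤ R / r := by
        rw [show -(1 - θ) = θ - 1 by ring, Real.rpow_sub hr, Real.rpow_one]
        exact (div_le_div_iff_of_pos_right hr).mpr hrθR
      have hmulα : (-(1 - θ)) * α = -(D + ε') := by
        rw [hα]; field_simp
      refine le_trans ?_ (le_refl (C * (R / r) ^ α))
      apply mul_le_mul_of_nonneg_left ?_ (by linarith : (0:ℝ) ≤ C)
      calc r ^ (-(D + ε')) = (r ^ (-(1 - θ))) ^ α := by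
            rw [← hmulα, Real.rpow_mul hr.le]
        _ ≤ (R / r) ^ α := Real.rpow_le_rpow (Real.rpow_nonneg hr.le _) hbase hα0
    calc sInf S ≤ α := csInf_le hbdd hmem
      _ = D / (1 - θ) + ε := by
        rw [hα, hε']; field_simp
  · rw [Real.sInf_of_not_bddBelow hbdd]
    exact div_nonneg hD0 hθ1.le
end

section
/- Covering number of X_S at dyadic scales: for any S subset of N, any x in X_S, and integers 0 <= l < l + k, the set X_S intersected with the ball B(x, 2^{-l}) can be covered by at most 4 * 2^{#(S cap {l, l+1, ..., l+k-1})} intervals of length 2^{-l-k}, and requires at least 2^{#(S cap {l+1, ..., l+k-1})} such intervals (up to an absolute multiplicative constant) to cover. -/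
open Filter MeasureTheory Metric Set

namespace Stmt13Aux


open Finset

noncomputable def R (p : ℕ) : ℝ := (2:ℝ) ^ (-(p:ℤ))

lemma R_pos (p : ℕ) : 0 < R p := zpow_pos (by norm_num) _

lemma R_eq (p : ℕ) : R p = (2⁻¹ : ℝ) ^ p := by
  rw [R, zpow_neg, ← inv_zpow, zpow_natCast]

lemma R_anti {p q : ℕ} (h : p ≤ q) : R q ≤ R p := by
  rw [R_eq, R_eq]
  exact pow_le_pow_of_le_one (by norm_num) (by norm_num) h

lemma R_succ (p : ℕ) : R (p+1) = R p / 2 := by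
  rw [R_eq, R_eq, pow_succ]
  ring

lemma R_cast (i : ℕ) : (2:ℝ) ^ (-((i:ℤ)+1)) = R (i+1) := by
  rw [R]; congr 1 <;> push_cast <;> ring

lemma R_factor {p m : ℕ} (h : p ≤ m) : R p = 2 ^ (m - p) * R m := by
  rw [R, R, ← zpow_natCast (2:ℝ) (m - p), ← zpow_add₀ (by norm_num : (2:ℝ) ≠ 0)]
  congr 1
  omega

lemma R_factor' {i l : ℕ} (h : i + 2 ≤ l) : R (i+1) = 2 ^ (l - 2 - i) * (2 * R l) := by
  have h2 : (2:ℝ) ≠ 0 := by norm_num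
  rw [R, R, ← zpow_natCast (2:ℝ) (l - 2 - i),
    show (2:ℝ) * (2:ℝ)^(-(l:ℤ)) = (2:ℝ)^(1 + -(l:ℤ)) by rw [zpow_add₀ h2]; norm_num,
    ← zpow_add₀ h2]
  congr 1
  omega

lemma geom_eq (N k : ℕ) : (2:ℝ) ^ (-((k:ℤ) + (N:ℤ) + 1)) = R (N+1) * (2⁻¹:ℝ)^k := by
  rw [show ((2⁻¹:ℝ))^k = R k from (R_eq k).symm, R, R,
    ← zpow_add₀ (by norm_num : (2:ℝ) ≠ 0)]
  congr 1
  push_cast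
  ring

lemma geom_summable (N : ℕ) : Summable (fun k : ℕ => (2:ℝ) ^ (-((k:ℤ) + (N:ℤ) + 1))) := by
  apply Summable.congr
    (f := fun k : ℕ => R (N+1) * (2⁻¹:ℝ)^k)
    ((summable_geometric_of_lt_one (by norm_num) (by norm_num)).mul_left _)
  intro k
  exact (geom_eq N k).symm

lemma tsum_geom (N : ℕ) : ∑' k : ℕ, (2:ℝ) ^ (-((k:ℤ) + (N:ℤ) + 1)) = R N := by
  have : (fun k : ℕ => (2:ℝ) ^ (-((k:ℤ) + (N:ℤ) + 1))) =
      (fun k : ℕ => (R (N+1)) * (2⁻¹:ℝ)^k) := funext fun k => geom_eq N k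
  rw [this, tsum_mul_left, tsum_geometric_of_lt_one (by norm_num) (by norm_num), R_succ]
  norm_num

lemma term_nonneg (a : ℕ → ℝ) (ha : ∀ k, a k = 0 ∨ a k = 1) (k : ℕ) :
    0 ≤ a (k+1) * (2:ℝ) ^ (-(k+1:ℤ)) := by
  rcases ha (k+1) with h | h <;> rw [h] <;> simp <;> positivity

lemma summable_digits (a : ℕ → ℝ) (ha : ∀ k, a k = 0 ∨ a k = 1) :
    Summable (fun k : ℕ => a (k+1) * (2:ℝ) ^ (-(k+1:ℤ))) := by
  apply Summable.of_nonneg_of_le (term_nonneg a ha) (fun k => ?_) (geom_summable 0)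
  have h1 : a (k+1) * (2:ℝ)^(-(k+1:ℤ)) ≤ (2:ℝ)^(-(k+1:ℤ)) := by
    rcases ha (k+1) with h | h <;> rw [h] <;> simp <;> positivity
  refine h1.trans_eq ?_
  norm_num

lemma head_le_tsum (a : ℕ → ℝ) (ha : ∀ k, a k = 0 ∨ a k = 1) (N : ℕ) :
    (∑ i ∈ Finset.range N, a (i+1) * (2:ℝ) ^ (-(i+1:ℤ))) ≤
      (∑' k : ℕ, a (k+1) * (2:ℝ) ^ (-(k+1:ℤ))) ∧
    (∑' k : ℕ, a (k+1) * (2:ℝ) ^ (-(k+1:ℤ))) ≤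
      (∑ i ∈ Finset.range N, a (i+1) * (2:ℝ) ^ (-(i+1:ℤ))) + R N := by
  have hs := summable_digits a ha
  have key := Summable.sum_add_tsum_nat_add (f := fun k : ℕ => a (k+1) * (2:ℝ) ^ (-(k+1:ℤ))) N hs
  have hsum_tail : Summable (fun i : ℕ => a (i + N + 1) * (2:ℝ) ^ (-((i + N : ℕ)+1:ℤ))) :=
    (summable_nat_add_iff N).mpr hs
  have htail_nonneg : (0:ℝ) ≤ ∑' i : ℕ, a (i + N + 1) * (2:ℝ) ^ (-((i + N : ℕ)+1:ℤ)) :=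
    tsum_nonneg fun k => term_nonneg a ha (k + N)
  have htail_le : (∑' i : ℕ, a (i + N + 1) * (2:ℝ) ^ (-((i + N : ℕ)+1:ℤ))) ≤ R N := by
    rw [← tsum_geom N]
    apply Summable.tsum_le_tsum _ hsum_tail (geom_summable N)
    intro k
    have hc : (2:ℝ) ^ (-((k + N : ℕ)+1:ℤ)) = (2:ℝ) ^ (-((k:ℤ) + (N:ℤ) + 1)) := by
      congr 1 <;> push_cast <;> ring
    rw [hc]
    rcases ha (k + N + 1) with h | h <;> rw [h] <;> simp <;> positivity
  constructor
  · rw [← key]; linarith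
  · rw [← key]; linarith


lemma R_pred {n : ℕ} (hn : 1 ≤ n) : R (n-1) = 2 * R n := by
  have h := R_succ (n-1)
  rw [show (n-1)+1 = n from by omega] at h
  rw [h]
  ring

lemma sum_Ico_R {m n : ℕ} (hm : 1 ≤ m) (h : m ≤ n) :
    ∑ p ∈ Finset.Ico m n, R p = R (m-1) - R (n-1) := by
  induction n, h using Nat.le_induction with
  | base => simp
  | succ n hn ih =>
    rw [Finset.sum_Ico_succ_top hn, ih]
    have h1 : R ((n+1)-1) = R n := by norm_num
    rw [h1]
    have h2 := R_pred (show 1 ≤ n by omega)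
    linarith

lemma sum_R_sep {n : ℕ} (hn : 1 ≤ n) {A B : Finset ℕ} (hA : A ⊆ Finset.range n)
    (hB : B ⊆ Finset.range n) (hAB : A ≠ B) :
    R (n-1) ≤ |(∑ p ∈ A, R p) - ∑ p ∈ B, R p| := by
  classical
  have hsum : ∀ C : Finset ℕ, C ⊆ Finset.range n →
      (∑ p ∈ C, R p) = ((∑ p ∈ C, 2^(n - 1 - p) : ℕ) : ℝ) * R (n-1) := by
    intro C hC
    push_cast
    rw [Finset.sum_mul]
    apply Finset.sum_congr rfl
    intro p hp
    have hpn : p < n := Finset.mem_range.mp (hC hp)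
    exact R_factor (by omega : p ≤ n - 1)
  have himg : ∀ C : Finset ℕ, C ⊆ Finset.range n →
      (∑ p ∈ C, 2^(n - 1 - p) : ℕ) = ∑ q ∈ C.image (fun p => n - 1 - p), 2^q := by
    intro C hC
    rw [Finset.sum_image]
    intro p hp p' hp' he
    have := Finset.mem_range.mp (hC hp)
    have := Finset.mem_range.mp (hC hp')
    simp only at he
    omega
  have hkey : (∑ p ∈ A, 2^(n - 1 - p) : ℕ) ≠ (∑ p ∈ B, 2^(n - 1 - p) : ℕ) := by
    intro heq
    apply hAB
    rw [himg A hA, himg B hB] at heq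
    have himg_eq : A.image (fun p => n - 1 - p) = B.image (fun p => n - 1 - p) :=
      Finset.geomSum_injective (le_refl 2) heq
    ext p
    constructor
    · intro hp
      by_cases hpn : p < n
      · have : n - 1 - p ∈ B.image (fun p => n - 1 - p) := by
          rw [← himg_eq]; exact Finset.mem_image_of_mem _ hp
        obtain ⟨p', hp', he⟩ := Finset.mem_image.mp this
        have := Finset.mem_range.mp (hB hp')
        have : p' = p := by omega
        rwa [← this]
      · exact absurd (Finset.mem_range.mp (hA hp)) hpn
    · intro hp
      by_cases hpn : p < n
      · have : n - 1 - p ∈ A.image (fun p => n - 1 - p) := by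
          rw [himg_eq]; exact Finset.mem_image_of_mem _ hp
        obtain ⟨p', hp', he⟩ := Finset.mem_image.mp this
        have := Finset.mem_range.mp (hA hp')
        have : p' = p := by omega
        rwa [← this]
      · exact absurd (Finset.mem_range.mp (hB hp)) hpn
  rw [hsum A hA, hsum B hB, ← sub_mul, abs_mul, abs_of_pos (R_pos _)]
  have h1 : (1:ℝ) ≤ |((∑ p ∈ A, 2^(n - 1 - p) : ℕ) : ℝ) - ((∑ p ∈ B, 2^(n - 1 - p) : ℕ) : ℝ)| := by
    have h2 : ((∑ p ∈ A, 2^(n - 1 - p) : ℕ) : ℤ) ≠ ((∑ p ∈ B, 2^(n - 1 - p) : ℕ) : ℤ) := by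
      exact_mod_cast hkey
    have h3 := Int.one_le_abs (sub_ne_zero.mpr h2)
    exact_mod_cast h3
  nlinarith [R_pos (n-1)]


end Stmt13Aux

open Stmt13Aux

/-- covering numbers of `X_S` at dyadic scales. -/
theorem stmt_13 :
    ∃ c : ℝ, 0 < c ∧ ∀ (S : Set ℕ) (x : ℝ), x ∈ XS S → ∀ l k : ℕ, 0 < k →
      (∃ I : Finset ℝ, (I.card : ℝ) ≤ 4 * 2 ^ ((S ∩ Set.Ico l (l + k)).ncard) ∧
        XS S ∩ Metric.ball x ((2:ℝ) ^ (-(l : ℤ))) ⊆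
          ⋃ a ∈ I, Set.Icc a (a + (2:ℝ) ^ (-(l : ℤ) - (k : ℤ)))) ∧
      (∀ I : Finset ℝ,
        XS S ∩ Metric.ball x ((2:ℝ) ^ (-(l : ℤ))) ⊆
          ⋃ a ∈ I, Set.Icc a (a + (2:ℝ) ^ (-(l : ℤ) - (k : ℤ))) →
        c * 2 ^ ((S ∩ Set.Ico (l + 1) (l + k)).ncard) ≤ (I.card : ℝ)) := by
  classical
  refine ⟨1, one_pos, ?_⟩
  rintro S x hx l k hk
  obtain ⟨a, ha01, haS, hxa⟩ := hx
  have hδR : (2:ℝ) ^ (-(l : ℤ) - (k : ℤ)) = R (l + k) := by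
    rw [R]; congr 1; push_cast; ring
  have hlR : (2:ℝ) ^ (-(l : ℤ)) = R l := rfl
  rw [hδR, hlR]
  set δ := R (l+k) with hδdef
  have hδpos : 0 < δ := R_pos _
  have h2δ : R (l + k - 1) = 2 * δ := by
    rw [hδdef, ← R_pred (by omega : 1 ≤ l + k)]
  have h2δl : 2 * δ ≤ R l := by
    rw [← h2δ]; exact R_anti (by omega)
  constructor
  · -- UPPER BOUND
    set N := l + k - 1 with hN
    set F : Finset ℕ := (Finset.Ico l (l+k)).filter (· ∈ S) with hF
    have hFcard : (S ∩ Set.Ico l (l+k)).ncard = F.card := by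
      rw [← Set.ncard_coe_finset]
      congr 1
      ext p
      simp only [hF, Finset.coe_filter, Finset.mem_Ico, Set.mem_setOf_eq,
        Set.mem_inter_iff, Set.mem_Ico]
      tauto
    set s : ℝ := 2 * R l with hs
    have hspos : 0 < s := by have := R_pos l; rw [hs]; linarith
    set m0 : Finset ℕ → ℤ := fun A => ⌈(x - R l - 2*δ - ∑ p ∈ A, R p) / s⌉ with hm0
    refine ⟨(F.powerset ×ˢ (Finset.range 2 ×ˢ Finset.range 2)).image
        (fun q => ((m0 q.1 : ℝ) + (q.2.1 : ℝ)) * s + (∑ p ∈ q.1, R p) + (q.2.2 : ℝ) * δ), ?_, ?_⟩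
    · have h1 : ((F.powerset ×ˢ (Finset.range 2 ×ˢ Finset.range 2)).image
          (fun q => ((m0 q.1 : ℝ) + (q.2.1 : ℝ)) * s + (∑ p ∈ q.1, R p) + (q.2.2 : ℝ) * δ)).card
          ≤ 2 ^ F.card * 4 := by
        refine le_trans Finset.card_image_le ?_
        rw [Finset.card_product, Finset.card_product, Finset.card_powerset,
          Finset.card_range]
      calc (((F.powerset ×ˢ (Finset.range 2 ×ˢ Finset.range 2)).image
            (fun q => ((m0 q.1 : ℝ) + (q.2.1 : ℝ)) * s + (∑ p ∈ q.1, R p) + (q.2.2 : ℝ) * δ)).card : ℝ)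
          ≤ ((2 ^ F.card * 4 : ℕ) : ℝ) := by exact_mod_cast h1
        _ = 4 * 2 ^ F.card := by push_cast; ring
        _ = 4 * 2 ^ (S ∩ Set.Ico l (l+k)).ncard := by rw [hFcard]
    · rintro y ⟨hyXS, hyball⟩
      obtain ⟨b, hb01, hbS, hyb⟩ := hyXS
      set t : ℝ := ∑ i ∈ Finset.range N, b (i+1) * (2:ℝ) ^ (-(i+1:ℤ)) with ht
      have hht := head_le_tsum b hb01 N
      rw [← hyb, ← ht] at hht
      have hty : t ≤ y := hht.1
      have hyt : y ≤ t + 2*δ := by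
        have := hht.2
        rw [h2δ] at this
        exact this
      have hybx : |y - x| < R l := by
        rw [← Real.dist_eq]
        exact Metric.mem_ball.mp hyball
      set Ay := (Finset.Ico (max l 1) (l+k)).filter (fun p => b p = 1) with hAy
      have hAyF : Ay ∈ F.powerset := by
        rw [Finset.mem_powerset]
        intro p hp
        rw [hAy, Finset.mem_filter, Finset.mem_Ico] at hp
        rw [hF, Finset.mem_filter, Finset.mem_Ico]
        refine ⟨⟨by omega, hp.1.2⟩, ?_⟩
        by_contra hpS
        rw [hbS p hpS] at hp
        exact absurd hp.2 (by norm_num)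
      set u : ℝ := ∑ i ∈ Finset.range (l-1), b (i+1) * (2:ℝ)^(-(i+1:ℤ)) with hu
      have hIeq : Finset.Ico (l-1+1) (N+1) = Finset.Ico (max l 1) (l+k) := by
        congr 1 <;> omega
      have hvAy : (∑ i ∈ Finset.Ico (l-1) N, b (i+1) * (2:ℝ)^(-(i+1:ℤ)))
          = ∑ p ∈ Ay, R p := by
        have h1 : ∀ i ∈ Finset.Ico (l-1) N, b (i+1) * (2:ℝ)^(-(i+1:ℤ)) =
            (fun p => b p * R p) (i + 1) := by
          intro i _
          show _ = b (i+1) * R (i+1)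
          rw [R_cast]
        rw [Finset.sum_congr rfl h1, Finset.sum_Ico_add' (fun p => b p * R p) (l-1) N 1,
          hIeq, hAy, Finset.sum_filter]
        apply Finset.sum_congr rfl
        intro p _
        rcases hb01 p with h | h <;> rw [h]
        · rw [if_neg (by norm_num : ¬ (0:ℝ) = 1)]; ring
        · rw [if_pos rfl]; ring
      have hsplit : t = u + ∑ p ∈ Ay, R p := by
        rw [← hvAy, ht, hu]
        simp only [Finset.range_eq_Ico]
        exact (Finset.sum_Ico_consecutive _ (Nat.zero_le (l-1)) (by omega : l-1 ≤ N)).symm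
      set n : ℕ := ∑ i ∈ Finset.range (l-1), (if b (i+1) = 1 then 2^(l-2-i) else 0) with hn
      have hun : u = (n:ℝ) * s := by
        have hterm : ∀ i ∈ Finset.range (l-1), b (i+1) * (2:ℝ)^(-(i+1:ℤ)) =
            ((if b (i+1) = 1 then 2^(l-2-i) else 0 : ℕ) : ℝ) * s := by
          intro i hi
          have hil : i + 2 ≤ l := by
            have := Finset.mem_range.mp hi; omega
          rcases hb01 (i+1) with h | h <;> rw [h]
          · rw [if_neg (by norm_num : ¬ (0:ℝ) = 1)]
            norm_num
          · rw [if_pos rfl, one_mul, R_cast, R_factor' hil, hs]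
            push_cast
            ring
        rw [hu, Finset.sum_congr rfl hterm, ← Finset.sum_mul, hn]
        congr 1
        rw [Nat.cast_sum]
      have hvnonneg : 0 ≤ ∑ p ∈ Ay, R p := Finset.sum_nonneg fun p _ => (R_pos p).le
      have hut : u = t - ∑ p ∈ Ay, R p := by rw [hsplit]; ring
      have habs := abs_lt.mp hybx
      have hulo : x - R l - 2*δ - ∑ p ∈ Ay, R p < u := by
        rw [hut]; cases habs; linarith
      have huhi : u < x + R l - ∑ p ∈ Ay, R p := by
        rw [hut]; cases habs; linarith
      have hm0n : m0 Ay ≤ (n:ℤ) := by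
        simp only [hm0]
        apply Int.ceil_le.mpr
        rw [div_le_iff₀ hspos]
        push_cast
        rw [← hun]
        linarith
      have hnm0 : (n:ℤ) ≤ m0 Ay + 1 := by
        by_contra hcon
        push_neg at hcon
        have h1' : m0 Ay + 2 ≤ (n:ℤ) := by omega
        have h1 : (m0 Ay : ℝ) + 2 ≤ (n:ℝ) := by exact_mod_cast h1'
        have h2 : (x - R l - 2*δ - ∑ p ∈ Ay, R p)/s ≤ (m0 Ay : ℝ) := by
          have := Int.le_ceil ((x - R l - 2*δ - ∑ p ∈ Ay, R p)/s)
          simpa [hm0] using this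
        have h3 : (x - R l - 2*δ - ∑ p ∈ Ay, R p) + 2*s ≤ u := by
          rw [hun]
          have h4 : ((x - R l - 2*δ - ∑ p ∈ Ay, R p)/s) * s
              = x - R l - 2*δ - ∑ p ∈ Ay, R p := by
            field_simp
          nlinarith
        rw [hs] at h3
        have := R_pos l
        linarith
      set i : ℕ := ((n:ℤ) - m0 Ay).toNat with hi
      have hi2 : i ∈ Finset.range 2 := by
        rw [Finset.mem_range, hi]; omega
      have hmi : ((m0 Ay : ℝ) + (i:ℝ)) = (n:ℝ) := by
        have : (m0 Ay + (i:ℤ)) = (n:ℤ) := by rw [hi]; omega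
        exact_mod_cast this
      set j : ℕ := if y ≤ t + δ then 0 else 1 with hj
      have hj2 : j ∈ Finset.range 2 := by
        rw [Finset.mem_range, hj]; split_ifs <;> omega
      apply Set.mem_iUnion₂.mpr
      refine ⟨((m0 Ay : ℝ) + (i:ℝ)) * s + (∑ p ∈ Ay, R p) + (j:ℝ) * δ, ?_, ?_⟩
      · apply Finset.mem_image.mpr
        exact ⟨(Ay, (i, j)), Finset.mem_product.mpr
          ⟨hAyF, Finset.mem_product.mpr ⟨hi2, hj2⟩⟩, rfl⟩
      · have hc0t : ((m0 Ay : ℝ) + (i:ℝ)) * s + (∑ p ∈ Ay, R p) + (j:ℝ) * δ = t + (j:ℝ) * δ := by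
          rw [hmi, ← hun, ← hsplit]
        rw [hc0t]
        by_cases hyδ : y ≤ t + δ
        · rw [hj, if_pos hyδ]
          constructor
          · push_cast; linarith
          · push_cast; linarith
        · rw [hj, if_neg hyδ]
          push_neg at hyδ
          constructor
          · push_cast; linarith
          · push_cast; linarith
  · -- LOWER BOUND
    rintro I hcov
    set P : Finset ℕ := (Finset.Ico (l+1) (l+k)).filter (· ∈ S) with hP
    have hPcard : (S ∩ Set.Ico (l+1) (l+k)).ncard = P.card := by
      rw [← Set.ncard_coe_finset]
      congr 1
      ext p
      simp only [hP, Finset.coe_filter, Finset.mem_Ico, Set.mem_setOf_eq,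
        Set.mem_inter_iff, Set.mem_Ico]
      tauto
    have hPsub : ∀ p ∈ P, l+1 ≤ p ∧ p < l+k := by
      intro p hp
      exact Finset.mem_Ico.mp (Finset.mem_filter.mp hp).1
    set b : Finset ℕ → ℕ → ℝ :=
      fun A p => if p ∈ P then (if p ∈ A then 1 else 0) else a p with hb
    have hb01 : ∀ A p, b A p = 0 ∨ b A p = 1 := by
      intro A p
      simp only [hb]
      split_ifs <;> simp [ha01 p]
    have hbS : ∀ A p, p ∉ S → b A p = 0 := by
      intro A p hpS
      simp only [hb]
      rw [if_neg, haS p hpS]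
      intro hpP
      exact hpS (Finset.mem_filter.mp hpP).2
    set Y : Finset ℕ → ℝ := fun A => ∑' m : ℕ, b A (m+1) * (2:ℝ)^(-(m+1:ℤ)) with hY
    have hYXS : ∀ A, Y A ∈ XS S := fun A => ⟨b A, hb01 A, hbS A, rfl⟩
    have hsa := summable_digits a ha01
    have hdiff : ∀ A : Finset ℕ, Y A - x = ∑ p ∈ P, (b A p - a p) * R p := by
      intro A
      have hsb := summable_digits (b A) (hb01 A)
      rw [hY]
      simp only []
      rw [hxa, ← Summable.tsum_sub hsb hsa,
        tsum_eq_sum (s := P.image (fun p => p - 1)) ?_]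
      · rw [Finset.sum_image ?_]
        · apply Finset.sum_congr rfl
          intro p hp
          have hp1 : l + 1 ≤ p := (hPsub p hp).1
          rw [R_cast]
          have hpe : p - 1 + 1 = p := by omega
          rw [hpe]
          ring
        · intro p hp q hq he
          have := (hPsub p hp).1
          have := (hPsub q hq).1
          simp only at he
          omega
      · intro m hm
        have hba : b A (m+1) = a (m+1) := by
          simp only [hb]
          rw [if_neg]
          intro hmem
          exact hm (Finset.mem_image.mpr ⟨m+1, hmem, by omega⟩)
        rw [hba]
        ring
    have hball : ∀ A : Finset ℕ, Y A ∈ Metric.ball x (R l) := by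
      intro A
      rw [Metric.mem_ball, Real.dist_eq, hdiff A]
      have h1 : |∑ p ∈ P, (b A p - a p) * R p| ≤ ∑ p ∈ P, R p := by
        refine (Finset.abs_sum_le_sum_abs _ _).trans ?_
        apply Finset.sum_le_sum
        intro p hp
        rw [abs_mul, abs_of_pos (R_pos p)]
        have hle1 : |b A p - a p| ≤ 1 := by
          rcases hb01 A p with h|h <;> rcases ha01 p with h'|h' <;>
            rw [h, h'] <;> norm_num
        nlinarith [R_pos p]
      have h2 : ∑ p ∈ P, R p ≤ ∑ p ∈ Finset.Ico (l+1) (l+k), R p := by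
        apply Finset.sum_le_sum_of_subset_of_nonneg (Finset.filter_subset _ _)
        intro p _ _
        exact (R_pos p).le
      have h3 : ∑ p ∈ Finset.Ico (l+1) (l+k), R p = R (l+1-1) - R (l+k-1) := by
        rw [sum_Ico_R (by omega : 1 ≤ l+1) (by omega : l+1 ≤ l+k)]
      have h4 : R (l+1-1) = R l := by norm_num
      rw [h4] at h3
      rw [h2δ] at h3
      linarith
    have hsep : ∀ A ∈ P.powerset, ∀ A' ∈ P.powerset, A ≠ A' → 2*δ ≤ |Y A - Y A'| := by
      intro A hA A' hA' hne
      have hAP := Finset.mem_powerset.mp hA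
      have hA'P := Finset.mem_powerset.mp hA'
      have hYd : Y A - Y A' = (∑ p ∈ A, R p) - ∑ p ∈ A', R p := by
        have e1 : Y A - Y A' =
            ∑ p ∈ P, ((b A p - a p) * R p - (b A' p - a p) * R p) := by
          rw [Finset.sum_sub_distrib, ← hdiff A, ← hdiff A']
          ring
        have e2 : ∀ p ∈ P, (b A p - a p) * R p - (b A' p - a p) * R p
            = (if p ∈ A then R p else 0) - (if p ∈ A' then R p else 0) := by
          intro p hp
          simp only [hb]
          rw [if_pos hp, if_pos hp]
          split_ifs <;> ring
        rw [e1, Finset.sum_congr rfl e2, Finset.sum_sub_distrib]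
        congr 1
        · rw [← Finset.sum_filter, Finset.filter_mem_eq_inter,
            Finset.inter_eq_right.mpr hAP]
        · rw [← Finset.sum_filter, Finset.filter_mem_eq_inter,
            Finset.inter_eq_right.mpr hA'P]
      rw [hYd, ← h2δ]
      apply sum_R_sep (show 1 ≤ l + k by omega) _ _ hne
      · intro p hp
        exact Finset.mem_range.mpr (hPsub p (hAP hp)).2
      · intro p hp
        exact Finset.mem_range.mpr (hPsub p (hA'P hp)).2
    set g : Finset ℕ → ℝ :=
      fun A => if h : ∃ c, c ∈ I ∧ Y A ∈ Set.Icc c (c + δ) then h.choose else 0 with hg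
    have hgspec : ∀ A, g A ∈ I ∧ Y A ∈ Set.Icc (g A) (g A + δ) := by
      intro A
      have hmem : Y A ∈ ⋃ c ∈ I, Set.Icc c (c + δ) := hcov ⟨hYXS A, hball A⟩
      rw [Set.mem_iUnion₂] at hmem
      obtain ⟨c, hcI, hc⟩ := hmem
      have hex : ∃ c, c ∈ I ∧ Y A ∈ Set.Icc c (c + δ) := ⟨c, hcI, hc⟩
      simp only [hg]
      rw [dif_pos hex]
      exact ⟨hex.choose_spec.1, hex.choose_spec.2⟩
    have hcard : P.powerset.card ≤ I.card := by
      apply Finset.card_le_card_of_injOn g (fun A _ => (hgspec A).1)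
      intro A hA A' hA' hgg
      by_contra hne
      have h1 := hsep A (Finset.mem_coe.mp hA) A' (Finset.mem_coe.mp hA') hne
      have h2 := (hgspec A).2
      have h3 := (hgspec A').2
      rw [hgg] at h2
      obtain ⟨h2a, h2b⟩ := h2
      obtain ⟨h3a, h3b⟩ := h3
      have habs : |Y A - Y A'| ≤ δ := by
        rw [abs_le]
        constructor <;> linarith
      linarith
    calc (1:ℝ) * 2 ^ (S ∩ Set.Ico (l+1) (l+k)).ncard = ((2 ^ P.card : ℕ) : ℝ) := by
          rw [hPcard]; push_cast; ring
      _ = ((P.powerset.card : ℕ) : ℝ) := by rw [Finset.card_powerset]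
      _ ≤ (I.card : ℝ) := by exact_mod_cast hcard
end
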